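/- In the Clifford algebra of ℝ⁸ with the standard positive definite quadratic form, the element f = (1/16)·(1−e₁₂₃₄)(1−e₁₂₅₆)(1−e₁₂₇₈)(1−e₁₃₅₇) is an idempotent, and 16·f = 1 − (e₁₂₃₄ + e₁₂₅₆ + e₁₂₇₈ + e₁₃₅₇ − e₁₃₆₈ − e₁₄₅₈ − e₁₄₆₇ − e₂₃₅₈ − e₂₃₆₇ − e₂₄₅₇ + e₂₄₆₈ + e₃₄₅₆ + e₃₄₇₈ + e₅₆₇₈) + e₁₂₃₄₅₆₇₈. -/
import Mathlib

/-- The standard positive definite quadratic form on ℝ⁸. -/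
noncomputable def Q8 : QuadraticForm ℝ (Fin 8 → ℝ) :=
  QuadraticMap.weightedSumSquares ℝ (fun _ : Fin 8 => (1 : ℝ))

/-- The images of the standard basis vectors in the Clifford algebra of ℝ⁸. -/
noncomputable def e8 (i : Fin 8) : CliffordAlgebra Q8 :=
  CliffordAlgebra.ι Q8 (Pi.single i 1)

lemma Q8_single (i : Fin 8) : Q8 (Pi.single i 1) = 1 := by
  simp [Q8, QuadraticMap.weightedSumSquares_apply, Pi.single_apply]

lemma e8_sq (i : Fin 8) : e8 i * e8 i = 1 := by
  rw [e8, CliffordAlgebra.ι_sq_scalar, Q8_single, map_one]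

lemma e8_swap {i j : Fin 8} (h : j < i) : e8 i * e8 j = -(e8 j * e8 i) := by
  have h2 := CliffordAlgebra.ι_mul_ι_add_swap (Q := Q8) (Pi.single i (1:ℝ)) (Pi.single j 1)
  have hp : QuadraticMap.polar Q8 (Pi.single i (1:ℝ)) (Pi.single j 1) = 0 := by
    have hij : i ≠ j := h.ne'
    simp only [QuadraticMap.polar, Q8, QuadraticMap.weightedSumSquares_apply, Pi.single_apply,
      Pi.add_apply, one_mul, smul_eq_mul]
    have key : ∀ x : Fin 8, ((if x = i then (1:ℝ) else 0) + if x = j then 1 else 0) *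
        ((if x = i then 1 else 0) + if x = j then 1 else 0)
        = (if x = i then 1 else 0) + (if x = j then 1 else 0) := by
      intro x
      by_cases hxi : x = i <;> by_cases hxj : x = j <;> simp_all
    rw [Finset.sum_congr rfl fun x _ => key x, Finset.sum_add_distrib]
    simp
  rw [hp, map_zero] at h2
  exact eq_neg_of_add_eq_zero_left h2

lemma e8_sq' (i : Fin 8) (x : CliffordAlgebra Q8) : e8 i * (e8 i * x) = x := by
  rw [← mul_assoc, e8_sq, one_mul]

lemma e8_swap' {i j : Fin 8} (h : j < i) (x : CliffordAlgebra Q8) :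
    e8 i * (e8 j * x) = -(e8 j * (e8 i * x)) := by
  rw [← mul_assoc, e8_swap h, neg_mul, mul_assoc]

lemma sq_mul_sq {R : Type*} [Monoid R] {u s : R} (h : Commute s u) :
    (u * s) * (u * s) = (u * u) * (s * s) := by
  rw [mul_assoc, ← mul_assoc s, h.eq, mul_assoc, ← mul_assoc]

lemma one_sub_sq {M : CliffordAlgebra Q8} (h : M * M = 1) :
    (1 - M) * (1 - M) = (2 : ℝ) • (1 - M) := by
  rw [sub_mul, one_mul, mul_sub, mul_one, h, two_smul]
  abel

theorem spin7_idempotent_and_expansion :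
    (((1/16 : ℝ) • ((1 - e8 0 * e8 1 * e8 2 * e8 3) * (1 - e8 0 * e8 1 * e8 4 * e8 5) *
        (1 - e8 0 * e8 1 * e8 6 * e8 7) * (1 - e8 0 * e8 2 * e8 4 * e8 6))) *
      ((1/16 : ℝ) • ((1 - e8 0 * e8 1 * e8 2 * e8 3) * (1 - e8 0 * e8 1 * e8 4 * e8 5) *
        (1 - e8 0 * e8 1 * e8 6 * e8 7) * (1 - e8 0 * e8 2 * e8 4 * e8 6))) =
      (1/16 : ℝ) • ((1 - e8 0 * e8 1 * e8 2 * e8 3) * (1 - e8 0 * e8 1 * e8 4 * e8 5) *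
        (1 - e8 0 * e8 1 * e8 6 * e8 7) * (1 - e8 0 * e8 2 * e8 4 * e8 6))) ∧
    (16 : ℝ) • ((1/16 : ℝ) • ((1 - e8 0 * e8 1 * e8 2 * e8 3) * (1 - e8 0 * e8 1 * e8 4 * e8 5) *
        (1 - e8 0 * e8 1 * e8 6 * e8 7) * (1 - e8 0 * e8 2 * e8 4 * e8 6))) =
      1 - (e8 0 * e8 1 * e8 2 * e8 3 + e8 0 * e8 1 * e8 4 * e8 5 + e8 0 * e8 1 * e8 6 * e8 7
        + e8 0 * e8 2 * e8 4 * e8 6 - e8 0 * e8 2 * e8 5 * e8 7 - e8 0 * e8 3 * e8 4 * e8 7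
        - e8 0 * e8 3 * e8 5 * e8 6 - e8 1 * e8 2 * e8 4 * e8 7 - e8 1 * e8 2 * e8 5 * e8 6
        - e8 1 * e8 3 * e8 4 * e8 6 + e8 1 * e8 3 * e8 5 * e8 7 + e8 2 * e8 3 * e8 4 * e8 5
        + e8 2 * e8 3 * e8 6 * e8 7 + e8 4 * e8 5 * e8 6 * e8 7)
      + e8 0 * e8 1 * e8 2 * e8 3 * e8 4 * e8 5 * e8 6 * e8 7 := by
  have hA : (e8 0 * e8 1 * e8 2 * e8 3) * (e8 0 * e8 1 * e8 2 * e8 3) = 1 := by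
    simp only [mul_assoc]
    simp (config := { decide := true }) only [e8_sq, e8_sq', e8_swap, e8_swap', mul_one, one_mul,
      mul_neg, neg_mul, neg_neg]
  have hB : (e8 0 * e8 1 * e8 4 * e8 5) * (e8 0 * e8 1 * e8 4 * e8 5) = 1 := by
    simp only [mul_assoc]
    simp (config := { decide := true }) only [e8_sq, e8_sq', e8_swap, e8_swap', mul_one, one_mul,
      mul_neg, neg_mul, neg_neg]
  have hC : (e8 0 * e8 1 * e8 6 * e8 7) * (e8 0 * e8 1 * e8 6 * e8 7) = 1 := by
    simp only [mul_assoc]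
    simp (config := { decide := true }) only [e8_sq, e8_sq', e8_swap, e8_swap', mul_one, one_mul,
      mul_neg, neg_mul, neg_neg]
  have hD : (e8 0 * e8 2 * e8 4 * e8 6) * (e8 0 * e8 2 * e8 4 * e8 6) = 1 := by
    simp only [mul_assoc]
    simp (config := { decide := true }) only [e8_sq, e8_sq', e8_swap, e8_swap', mul_one, one_mul,
      mul_neg, neg_mul, neg_neg]
  have cAB : Commute (e8 0 * e8 1 * e8 2 * e8 3) (e8 0 * e8 1 * e8 4 * e8 5) := by
    unfold Commute SemiconjBy
    simp only [mul_assoc]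
    simp (config := { decide := true }) only [e8_sq, e8_sq', e8_swap, e8_swap', mul_one, one_mul,
      mul_neg, neg_mul, neg_neg]
  have cAC : Commute (e8 0 * e8 1 * e8 2 * e8 3) (e8 0 * e8 1 * e8 6 * e8 7) := by
    unfold Commute SemiconjBy
    simp only [mul_assoc]
    simp (config := { decide := true }) only [e8_sq, e8_sq', e8_swap, e8_swap', mul_one, one_mul,
      mul_neg, neg_mul, neg_neg]
  have cAD : Commute (e8 0 * e8 1 * e8 2 * e8 3) (e8 0 * e8 2 * e8 4 * e8 6) := by
    unfold Commute SemiconjBy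
    simp only [mul_assoc]
    simp (config := { decide := true }) only [e8_sq, e8_sq', e8_swap, e8_swap', mul_one, one_mul,
      mul_neg, neg_mul, neg_neg]
  have cBC : Commute (e8 0 * e8 1 * e8 4 * e8 5) (e8 0 * e8 1 * e8 6 * e8 7) := by
    unfold Commute SemiconjBy
    simp only [mul_assoc]
    simp (config := { decide := true }) only [e8_sq, e8_sq', e8_swap, e8_swap', mul_one, one_mul,
      mul_neg, neg_mul, neg_neg]
  have cBD : Commute (e8 0 * e8 1 * e8 4 * e8 5) (e8 0 * e8 2 * e8 4 * e8 6) := by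
    unfold Commute SemiconjBy
    simp only [mul_assoc]
    simp (config := { decide := true }) only [e8_sq, e8_sq', e8_swap, e8_swap', mul_one, one_mul,
      mul_neg, neg_mul, neg_neg]
  have cCD : Commute (e8 0 * e8 1 * e8 6 * e8 7) (e8 0 * e8 2 * e8 4 * e8 6) := by
    unfold Commute SemiconjBy
    simp only [mul_assoc]
    simp (config := { decide := true }) only [e8_sq, e8_sq', e8_swap, e8_swap', mul_one, one_mul,
      mul_neg, neg_mul, neg_neg]
  -- commuting binomials
  have pq : Commute (1 - e8 0 * e8 1 * e8 4 * e8 5) (1 - e8 0 * e8 1 * e8 2 * e8 3) :=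
    (Commute.one_right _).sub_right ((Commute.one_left _).sub_left cAB.symm)
  have rp : Commute (1 - e8 0 * e8 1 * e8 6 * e8 7) (1 - e8 0 * e8 1 * e8 2 * e8 3) :=
    (Commute.one_right _).sub_right ((Commute.one_left _).sub_left cAC.symm)
  have rq : Commute (1 - e8 0 * e8 1 * e8 6 * e8 7) (1 - e8 0 * e8 1 * e8 4 * e8 5) :=
    (Commute.one_right _).sub_right ((Commute.one_left _).sub_left cBC.symm)
  have sp : Commute (1 - e8 0 * e8 2 * e8 4 * e8 6) (1 - e8 0 * e8 1 * e8 2 * e8 3) :=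
    (Commute.one_right _).sub_right ((Commute.one_left _).sub_left cAD.symm)
  have sq' : Commute (1 - e8 0 * e8 2 * e8 4 * e8 6) (1 - e8 0 * e8 1 * e8 4 * e8 5) :=
    (Commute.one_right _).sub_right ((Commute.one_left _).sub_left cBD.symm)
  have sr : Commute (1 - e8 0 * e8 2 * e8 4 * e8 6) (1 - e8 0 * e8 1 * e8 6 * e8 7) :=
    (Commute.one_right _).sub_right ((Commute.one_left _).sub_left cCD.symm)
  have key : ((1 - e8 0 * e8 1 * e8 2 * e8 3) * (1 - e8 0 * e8 1 * e8 4 * e8 5) *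
        (1 - e8 0 * e8 1 * e8 6 * e8 7) * (1 - e8 0 * e8 2 * e8 4 * e8 6)) *
      ((1 - e8 0 * e8 1 * e8 2 * e8 3) * (1 - e8 0 * e8 1 * e8 4 * e8 5) *
        (1 - e8 0 * e8 1 * e8 6 * e8 7) * (1 - e8 0 * e8 2 * e8 4 * e8 6)) =
      (16 : ℝ) • ((1 - e8 0 * e8 1 * e8 2 * e8 3) * (1 - e8 0 * e8 1 * e8 4 * e8 5) *
        (1 - e8 0 * e8 1 * e8 6 * e8 7) * (1 - e8 0 * e8 2 * e8 4 * e8 6)) := by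
    rw [sq_mul_sq ((sp.mul_right sq').mul_right sr), sq_mul_sq (rp.mul_right rq), sq_mul_sq pq,
      one_sub_sq hA, one_sub_sq hB, one_sub_sq hC, one_sub_sq hD]
    simp only [smul_mul_assoc, mul_smul_comm, smul_smul]
    norm_num
  constructor
  · rw [smul_mul_assoc, mul_smul_comm, key, smul_smul, smul_smul]
    norm_num
  · rw [smul_smul]
    norm_num
    simp only [mul_add, add_mul, mul_sub, sub_mul, mul_one, one_mul, mul_neg, neg_mul, neg_neg,
      mul_assoc, sub_eq_add_neg, neg_add]
    simp (config := { decide := true }) only [e8_sq, e8_sq', e8_swap, e8_swap', mul_one, one_mul,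
      mul_neg, neg_mul, neg_neg]
    abel
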